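/- If M is a symmetric positive definite matrix whose inverse is a complete M-matrix, then for every nonempty index subset a, the inverse of the principal submatrix M[a,a] is also a complete M-matrix. -/

import Mathlib

open Matrix Finset

lemma aux_sum_comp {m m' : Type*} [Fintype m] [Fintype m'] [DecidableEq m]
    {f : m' → m} (x : m' → ℝ) (g : m → ℝ) :
    ∑ i, (∑ j, if i = f j then x j else 0) * g i = ∑ j, x j * g (f j) := by
  simp only [Finset.sum_mul, ite_mul, zero_mul]
  rw [Finset.sum_comm]
  simp [Finset.sum_ite_eq']

lemma posDef_submatrix_inj {m m' : Type*} [Fintype m] [Fintype m'] [DecidableEq m]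
    {M : Matrix m m ℝ} (hM : M.PosDef) {f : m' → m} (hf : Function.Injective f) :
    (M.submatrix f f).PosDef := by
  refine Matrix.PosDef.of_dotProduct_mulVec_pos (hM.1.submatrix f) (fun x hx => ?_)
  classical
  set y : m → ℝ := fun i => ∑ j, if i = f j then x j else 0 with hy
  have hyf : ∀ j, y (f j) = x j := by
    intro j
    simp only [hy]
    rw [Finset.sum_eq_single j]
    · simp
    · exact fun b _ hb => if_neg (fun h => hb (hf h.symm))
    · simp
  have hy0 : y ≠ 0 := by
    obtain ⟨j, hj⟩ := Function.ne_iff.mp hx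
    intro h
    exact hj (by rw [← hyf j, h]; rfl)
  have hmv : ∀ i, (M *ᵥ y) i = ∑ l, x l * M i (f l) := by
    intro i
    simp only [mulVec, dotProduct]
    simp_rw [mul_comm (M i _)]
    exact aux_sum_comp x (fun k => M i k)
  have key : star x ⬝ᵥ (M.submatrix f f) *ᵥ x = star y ⬝ᵥ M *ᵥ y := by
    simp only [star_trivial, dotProduct]
    rw [aux_sum_comp x (fun i => (M *ᵥ y) i)]
    refine Finset.sum_congr rfl fun j _ => ?_
    rw [hmv]
    simp only [mulVec, dotProduct, submatrix_apply]
    rw [Finset.mul_sum, Finset.mul_sum]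
    exact Finset.sum_congr rfl fun l _ => by ring
  rw [key]
  exact hM.dotProduct_mulVec_pos hy0

lemma posDef_diag_pos {m : Type*} [Fintype m] [DecidableEq m]
    {A : Matrix m m ℝ} (hA : A.PosDef) (i : m) : 0 < A i i := by
  have := hA.dotProduct_mulVec_pos (x := Pi.single i 1) (by
    intro h
    have := congrFun h i
    simp at this)
  simpa [dotProduct, mulVec, Pi.single_apply, Finset.sum_ite_eq, mul_comm] using this

lemma step_inv {m m' : Type*} [Fintype m] [Fintype m'] [DecidableEq m] [DecidableEq m']
    (M : Matrix m m ℝ) (hM : M.PosDef) {f : m' → m} (hf : Function.Injective f)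
    (k : m) (hk : ∀ x : m, x ≠ k ↔ ∃ j, f j = x) :
    ∀ i j, (M.submatrix f f)⁻¹ i j
      = M⁻¹ (f i) (f j) - M⁻¹ (f i) k * M⁻¹ k (f j) / M⁻¹ k k := by
  classical
  set N := M⁻¹ with hN
  have hNpd : N.PosDef := hM.inv
  have hNkk : 0 < N k k := posDef_diag_pos hNpd k
  have hfk : ∀ j, f j ≠ k := fun j => (hk (f j)).mpr ⟨j, rfl⟩
  have hNM : N * M = 1 := Matrix.nonsing_inv_mul M hM.det_pos.ne'.isUnit
  have hsum : ∀ g : m → ℝ, ∑ l, g (f l) = (∑ x, g x) - g k := by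
    intro g
    have h1 : ∑ x ∈ Finset.univ.erase k, g x = ∑ l, g (f l) := by
      refine (Finset.sum_bij (fun l _ => f l) ?_ ?_ ?_ ?_).symm
      · intro l _
        exact Finset.mem_erase.mpr ⟨hfk l, Finset.mem_univ _⟩
      · intro a _ b _ h
        exact hf h
      · intro x hx
        obtain ⟨j, hj⟩ := (hk x).mp (Finset.mem_erase.mp hx).1
        exact ⟨j, Finset.mem_univ _, hj⟩
      · intro l _; rfl
    rw [← h1, Finset.sum_erase_eq_sub (Finset.mem_univ k)]
  set S : Matrix m' m' ℝ :=
    Matrix.of (fun i j => N (f i) (f j) - N (f i) k * N k (f j) / N k k) with hS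
  have hmain : S * (M.submatrix f f) = 1 := by
    ext i j
    simp only [Matrix.mul_apply, hS, Matrix.of_apply, submatrix_apply]
    rw [hsum (fun x => (N (f i) x - N (f i) k * N k x / N k k) * M x (f j))]
    have e1 : ∑ x, (N (f i) x - N (f i) k * N k x / N k k) * M x (f j)
        = (∑ x, N (f i) x * M x (f j))
          - (N (f i) k / N k k) * (∑ x, N k x * M x (f j)) := by
      rw [Finset.mul_sum, ← Finset.sum_sub_distrib]
      exact Finset.sum_congr rfl fun x _ => by ring
    rw [e1]
    have e2 : ∑ x, N (f i) x * M x (f j) = (1 : Matrix m m ℝ) (f i) (f j) := by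
      rw [← hNM]; simp [Matrix.mul_apply]
    have e3 : ∑ x, N k x * M x (f j) = (1 : Matrix m m ℝ) k (f j) := by
      rw [← hNM]; simp [Matrix.mul_apply]
    rw [e2, e3]
    have h1 : (1 : Matrix m m ℝ) k (f j) = 0 := by
      simp [Matrix.one_apply, (hfk j).symm, Ne.symm (hfk j)]
    have h2 : (1 : Matrix m m ℝ) (f i) (f j) = (1 : Matrix m' m' ℝ) i j := by
      simp [Matrix.one_apply, hf.eq_iff]
    have h3 : (N (f i) k - N (f i) k * N k k / N k k) * M k (f j) = 0 := by
      field_simp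
      ring
    rw [h1, h2]
    ring_nf
    ring_nf at h3
    linarith [h3]
  intro i j
  rw [Matrix.inv_eq_left_inv hmain]
  rfl

/-- If M is symmetric positive definite and M⁻¹ is a complete M-matrix, then the
inverse of every principal submatrix of M is also a complete M-matrix. -/
theorem principal_submatrix_inverse_M_matrix
    {n : Type*} [Fintype n] [DecidableEq n]
    (M : Matrix n n ℝ) (hsym : M.IsSymm) (hpd : M.PosDef)
    (hdiag : ∀ i, 0 < M⁻¹ i i) (hoff : ∀ i j, i ≠ j → M⁻¹ i j < 0)
    (a : Finset n) (ha : a.Nonempty) :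
    (∀ i : a, 0 < (M.submatrix (Subtype.val : a → n) (Subtype.val : a → n))⁻¹ i i) ∧
    (∀ i j : a, i ≠ j →
      (M.submatrix (Subtype.val : a → n) (Subtype.val : a → n))⁻¹ i j < 0) := by
  classical
  suffices H : ∀ c : ℕ, ∀ a : Finset n, (aᶜ).card = c →
      (∀ i : a, 0 < (M.submatrix (Subtype.val : a → n) (Subtype.val : a → n))⁻¹ i i) ∧
      (∀ i j : a, i ≠ j →
        (M.submatrix (Subtype.val : a → n) (Subtype.val : a → n))⁻¹ i j < 0) by
    exact H _ a rfl
  intro c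
  induction c using Nat.strong_induction_on with
  | _ c IH =>
    intro a hc
    by_cases hcompl : aᶜ = ∅
    · -- a = univ
      have hauniv : a = Finset.univ := by
        rwa [Finset.compl_eq_empty_iff] at hcompl
      subst hauniv
      let e : {x : n // x ∈ (Finset.univ : Finset n)} ≃ n :=
        ⟨Subtype.val, fun x => ⟨x, Finset.mem_univ x⟩, fun x => rfl, fun x => rfl⟩
      have hsub : M.submatrix (Subtype.val : {x : n // x ∈ (Finset.univ : Finset n)} → n) Subtype.val
          = M.submatrix e e := rfl
      rw [hsub, Matrix.inv_submatrix_equiv]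
      refine ⟨fun i => hdiag _, fun i j hij => hoff _ _ (fun h => hij (Subtype.ext h))⟩
    · obtain ⟨k, hk⟩ := Finset.nonempty_iff_ne_empty.mpr hcompl
      have hka : k ∉ a := Finset.mem_compl.mp hk
      set a' : Finset n := insert k a with ha'
      have hcard : (a'ᶜ).card < c := by
        rw [← hc, ha', Finset.compl_insert]
        exact Finset.card_erase_lt_of_mem hk
      obtain ⟨IH1, IH2⟩ := IH _ hcard a' rfl
      have hPD' : (M.submatrix (Subtype.val : a' → n) Subtype.val).PosDef :=
        posDef_submatrix_inj hpd Subtype.val_injective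
      set f : {x // x ∈ a} → {x // x ∈ a'} :=
        fun i => ⟨i.1, Finset.mem_insert_of_mem i.2⟩ with hfdef
      have hfinj : Function.Injective f := by
        intro i j h
        have h2 := congrArg Subtype.val h
        exact Subtype.ext h2
      set k' : {x // x ∈ a'} := ⟨k, Finset.mem_insert_self k a⟩ with hk'def
      have hfik : ∀ i : {x // x ∈ a}, f i ≠ k' := by
        intro i h
        have h2 := congrArg Subtype.val h
        have h3 : ((f i : a') : n) ∈ a := i.2
        rw [h2] at h3
        exact hka h3
      have hk' : ∀ x : a', x ≠ k' ↔ ∃ j, f j = x := by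
        rintro ⟨v, hv⟩
        constructor
        · intro hne
          have hvk : v ≠ k := fun h => hne (Subtype.ext h)
          have hva : v ∈ a := (Finset.mem_insert.mp hv).resolve_left hvk
          exact ⟨⟨v, hva⟩, rfl⟩
        · rintro ⟨j, hj⟩
          exact hj ▸ hfik j
      have hstep := step_inv (M.submatrix (Subtype.val : a' → n) Subtype.val) hPD' hfinj k' hk'
      have hss : (M.submatrix (Subtype.val : a' → n) Subtype.val).submatrix f f
          = M.submatrix (Subtype.val : a → n) Subtype.val := rfl
      rw [hss] at hstep
      refine ⟨fun i => ?_, fun i j hij => ?_⟩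
      · have hPDa : (M.submatrix (Subtype.val : a → n) Subtype.val).PosDef :=
          posDef_submatrix_inj hpd Subtype.val_injective
        exact posDef_diag_pos hPDa.inv i
      · rw [hstep i j]
        have h1 : f i ≠ f j := fun h => hij (hfinj h)
        have hn1 := IH2 _ _ h1
        have hn2 := IH2 _ _ (hfik i)
        have hn3 := IH2 _ _ (Ne.symm (hfik j))
        have hkk := IH1 k'
        have hpos := div_pos (mul_pos_of_neg_of_neg hn2 hn3) hkk
        linarith
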